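/- The set 𝔎 of symplectic matrices of the form [[I+2a, 2b],[2c, I+2d]] in Sp(2g,ℤ) such that all diagonal entries of b and of c are even and the trace of a is even, is a subgroup of Sp(2g,ℤ). -/

import Mathlib

open Matrix

/-- The standard symplectic form matrix `J = [[0, I], [-I, 0]]`. -/
def Jmat (g : ℕ) (R : Type*) [CommRing R] :
    Matrix (Fin g ⊕ Fin g) (Fin g ⊕ Fin g) R :=
  Matrix.fromBlocks 0 1 (-1) 0

/-- The set of integral symplectic matrices, `Sp(2g, ℤ)`. -/
def SpSet (g : ℕ) : Set (Matrix (Fin g ⊕ Fin g) (Fin g ⊕ Fin g) ℤ) :=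
  {X | Xᵀ * Jmat g ℤ * X = Jmat g ℤ}

/-- The subset `𝔎` of `Sp(2g, ℤ)`: symplectic matrices of the form
`[[I+2a, 2b], [2c, I+2d]]` with `Diag b` and `Diag c` even and `Tr a` even. -/
def KSet (g : ℕ) : Set (Matrix (Fin g ⊕ Fin g) (Fin g ⊕ Fin g) ℤ) :=
  {X | X ∈ SpSet g ∧ ∃ a b c d : Matrix (Fin g) (Fin g) ℤ,
    X = Matrix.fromBlocks (1 + 2 • a) (2 • b) (2 • c) (1 + 2 • d) ∧
    (∀ i, (2:ℤ) ∣ b i i) ∧ (∀ i, (2:ℤ) ∣ c i i) ∧ (2:ℤ) ∣ Matrix.trace a}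

/-- The principal congruence subgroup `Γ(2g, N)`: symplectic integral matrices
congruent to the identity modulo `N`. -/
def GammaSet (g : ℕ) (N : ℤ) : Set (Matrix (Fin g ⊕ Fin g) (Fin g ⊕ Fin g) ℤ) :=
  {X | X ∈ SpSet g ∧ ∀ i j, N ∣ (X i j - (1 : Matrix (Fin g ⊕ Fin g) (Fin g ⊕ Fin g) ℤ) i j)}

lemma Jsq (g : ℕ) : Jmat g ℤ * Jmat g ℤ = -1 := by
  have h : (-1 : Matrix (Fin g ⊕ Fin g) (Fin g ⊕ Fin g) ℤ) =
      Matrix.fromBlocks (-1) 0 0 (-1) := by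
    rw [← Matrix.fromBlocks_one (m := Fin g), Matrix.fromBlocks_neg]
    simp
  rw [Jmat, Matrix.fromBlocks_multiply, h]
  simp

lemma sp_mul {g : ℕ} {X Y : Matrix (Fin g ⊕ Fin g) (Fin g ⊕ Fin g) ℤ}
    (hX : X ∈ SpSet g) (hY : Y ∈ SpSet g) : X * Y ∈ SpSet g := by
  have hX' : Xᵀ * Jmat g ℤ * X = Jmat g ℤ := hX
  have hY' : Yᵀ * Jmat g ℤ * Y = Jmat g ℤ := hY
  show (X * Y)ᵀ * Jmat g ℤ * (X * Y) = Jmat g ℤ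
  calc (X * Y)ᵀ * Jmat g ℤ * (X * Y)
      = Yᵀ * (Xᵀ * Jmat g ℤ * X) * Y := by rw [Matrix.transpose_mul]; noncomm_ring
    _ = Yᵀ * Jmat g ℤ * Y := by rw [hX']
    _ = Jmat g ℤ := hY'

/-- `𝔎` is a subgroup of `Sp(2g, ℤ)`: it contains the identity, is closed under
multiplication, and every element has an inverse lying in `𝔎`. -/
theorem stmt3 (g : ℕ) (hg : 1 ≤ g) :
    (1 : Matrix (Fin g ⊕ Fin g) (Fin g ⊕ Fin g) ℤ) ∈ KSet g ∧
    (∀ X ∈ KSet g, ∀ Y ∈ KSet g, X * Y ∈ KSet g) ∧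
    (∀ X ∈ KSet g, ∃ Y ∈ KSet g, X * Y = 1 ∧ Y * X = 1) := by
  refine ⟨?_, ?_, ?_⟩
  · -- identity
    refine ⟨?_, 0, 0, 0, 0, ?_, fun i => dvd_zero _, fun i => dvd_zero _, ?_⟩
    · show (1 : Matrix _ _ ℤ)ᵀ * Jmat g ℤ * 1 = Jmat g ℤ
      simp
    · simp [← Matrix.fromBlocks_one]
    · simp [Matrix.trace]
  · -- closure under multiplication
    rintro X ⟨hXsp, a, b, c, d, rfl, hb, hc, ha⟩ Y ⟨hYsp, a₂, b₂, c₂, d₂, rfl, hb₂, hc₂, ha₂⟩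
    refine ⟨sp_mul hXsp hYsp,
      a + a₂ + 2 • (a * a₂ + b * c₂),
      b₂ + b + 2 • (a * b₂ + b * d₂),
      c + c₂ + 2 • (c * a₂ + d * c₂),
      d₂ + d + 2 • (c * b₂ + d * d₂), ?_, ?_, ?_, ?_⟩
    · rw [Matrix.fromBlocks_multiply]
      congr 1 <;> noncomm_ring
    · intro i
      obtain ⟨k, hk⟩ := hb₂ i
      obtain ⟨l, hl⟩ := hb i
      simp only [Matrix.add_apply, Matrix.smul_apply]
      simp only [nsmul_eq_mul, Nat.cast_ofNat, hk, hl]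
      omega
    · intro i
      obtain ⟨k, hk⟩ := hc i
      obtain ⟨l, hl⟩ := hc₂ i
      simp only [Matrix.add_apply, Matrix.smul_apply]
      simp only [nsmul_eq_mul, Nat.cast_ofNat, hk, hl]
      omega
    · obtain ⟨k, hk⟩ := ha
      obtain ⟨l, hl⟩ := ha₂
      simp only [Matrix.trace_add, Matrix.trace_smul]
      simp only [nsmul_eq_mul, Nat.cast_ofNat, hk, hl, smul_eq_mul]
      omega
  · -- inverses
    rintro X ⟨hXsp, a, b, c, d, hXeq, hb, hc, ha⟩
    set Y : Matrix (Fin g ⊕ Fin g) (Fin g ⊕ Fin g) ℤ := -(Jmat g ℤ * Xᵀ * Jmat g ℤ) with hYdef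
    have hX' : Xᵀ * Jmat g ℤ * X = Jmat g ℤ := hXsp
    have hYX : Y * X = 1 := by
      calc Y * X = -(Jmat g ℤ * (Xᵀ * Jmat g ℤ * X)) := by rw [hYdef]; noncomm_ring
        _ = -(Jmat g ℤ * Jmat g ℤ) := by rw [hX']
        _ = 1 := by rw [Jsq]; simp
    have hXY : X * Y = 1 := mul_eq_one_comm.mpr hYX
    have hYsp : Y ∈ SpSet g := by
      show Yᵀ * Jmat g ℤ * Y = Jmat g ℤ
      have h1 : Yᵀ * Jmat g ℤ * Y = (X * Y)ᵀ * Jmat g ℤ * (X * Y) := by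
        rw [Matrix.transpose_mul]
        calc Yᵀ * Jmat g ℤ * Y = Yᵀ * (Xᵀ * Jmat g ℤ * X) * Y := by rw [hX']
          _ = Yᵀ * Xᵀ * Jmat g ℤ * (X * Y) := by noncomm_ring
      rw [h1, hXY]
      simp
    have hYblocks : Y = Matrix.fromBlocks (1 + 2 • dᵀ) (2 • (-bᵀ)) (2 • (-cᵀ)) (1 + 2 • aᵀ) := by
      rw [hYdef, hXeq, Jmat, Matrix.fromBlocks_transpose, Matrix.fromBlocks_multiply,
        Matrix.fromBlocks_multiply, Matrix.fromBlocks_neg]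
      congr 1 <;>
        simp only [Matrix.transpose_add, Matrix.transpose_smul, Matrix.transpose_one] <;>
        noncomm_ring
    -- trace condition for d
    have htl : (1 + 2 • a) * (1 + 2 • dᵀ) + (2 • b) * (2 • (-cᵀ)) = 1 := by
      have h2 : X * Y = Matrix.fromBlocks
          ((1 + 2 • a) * (1 + 2 • dᵀ) + (2 • b) * (2 • (-cᵀ)))
          ((1 + 2 • a) * (2 • (-bᵀ)) + (2 • b) * (1 + 2 • aᵀ))
          ((2 • c) * (1 + 2 • dᵀ) + (1 + 2 • d) * (2 • (-cᵀ)))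
          ((2 • c) * (2 • (-bᵀ)) + (1 + 2 • d) * (1 + 2 • aᵀ)) := by
        rw [hXeq, hYblocks, Matrix.fromBlocks_multiply]
      have h3 := h2.symm.trans hXY
      rw [← Matrix.fromBlocks_one] at h3
      have := congrArg Matrix.toBlocks₁₁ h3
      simpa [-Matrix.fromBlocks_one] using this
    have htr := congrArg Matrix.trace htl
    have hexp : (1 + 2 • a) * (1 + 2 • dᵀ) + (2 • b) * (2 • (-cᵀ)) =
        1 + 2 • a + 2 • dᵀ + 4 • (a * dᵀ) - 4 • (b * cᵀ) := by noncomm_ring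
    rw [hexp] at htr
    simp only [Matrix.trace_add, Matrix.trace_sub, Matrix.trace_smul] at htr
    simp only [nsmul_eq_mul, Nat.cast_ofNat, smul_eq_mul, Matrix.trace_transpose] at htr
    have htrd : (2:ℤ) ∣ Matrix.trace dᵀ := by
      rw [Matrix.trace_transpose]
      obtain ⟨k, hk⟩ := ha
      omega
    refine ⟨Y, ⟨hYsp, dᵀ, -bᵀ, -cᵀ, aᵀ, hYblocks, ?_, ?_, htrd⟩, hXY, hYX⟩
    · intro i
      simp only [Matrix.neg_apply, Matrix.transpose_apply]
      exact (hb i).neg_right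
    · intro i
      simp only [Matrix.neg_apply, Matrix.transpose_apply]
      exact (hc i).neg_right
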